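/- Let R be a faithful, antipodal signed groupoid set, with maximum element ωₐ : wₐ → a of weak order at each object a. Define g^⊥ := g ω_b for g : b → a. Then g ↦ g^⊥ is an order-reversing involution of the weak order at a satisfying g ∨ g^⊥ = ωₐ, g ∧ g^⊥ = 1ₐ, and for g, h ∈ ₐG, Φ_g ∩ Φ_h = ∅ if and only if g ≤ h^⊥. Consequently, if R is complete then the weak order at each object is a complete ortholattice and R satisfies the Join Orthogonality Property. -/
import Mathlib


open CategoryTheory

universe u v

/-- A signed groupoid set: a groupoid `G` acting on a family of definitely involuted
sets `R a` (`a ∈ Ob G`), with involution `neg`, positive parts `pos a`, and the action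
commuting with the involution. -/
structure SGS (G : Type u) [Groupoid G] (R : G → Type v) where
  neg : ∀ {a : G}, R a → R a
  pos : ∀ a : G, Set (R a)
  act : ∀ {a b : G}, (b ⟶ a) → R b → R a
  neg_neg : ∀ {a : G} (x : R a), neg (neg x) = x
  pos_iff : ∀ {a : G} (x : R a), x ∈ pos a ↔ neg x ∉ pos a
  act_id : ∀ {a : G} (x : R a), act (𝟙 a) x = x
  act_comp : ∀ {a b c : G} (g : c ⟶ b) (f : b ⟶ a) (x : R c),
      act f (act g x) = act (g ≫ f) x
  act_neg : ∀ {a b : G} (f : b ⟶ a) (x : R b), act f (neg x) = neg (act f x)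

/-- The morphisms of `G` with codomain `a`. -/
abbrev SHoms (G : Type u) [Groupoid G] (a : G) : Type _ := Σ b : G, (b ⟶ a)

namespace SGS

variable {G : Type u} [Groupoid G] {R : G → Type v} (S : SGS G R)

/-- The inversion set of a morphism `f : b ⟶ a`: positive roots at `a` sent to
negative roots at `b` by `f⁻¹`. -/
def Phi {a b : G} (f : b ⟶ a) : Set (R a) :=
  {α | α ∈ S.pos a ∧ S.act (Groupoid.inv f) α ∉ S.pos b}

/-- The inversion set of an element of `SHoms G a`. -/
def PhiS {a : G} (g : SHoms G a) : Set (R a) := S.Phi g.2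

/-- `S` is faithful if only identity morphisms have empty inversion set. -/
def Faithful : Prop :=
  ∀ ⦃a b : G⦄ (f : b ⟶ a), S.Phi f = ∅ → ∃ h : b = a, f = eqToHom h

/-- `j` is an upper bound of `F` in the weak order at `a`. -/
def IsUB {a : G} (F : Set (SHoms G a)) (j : SHoms G a) : Prop :=
  ∀ g ∈ F, S.PhiS g ⊆ S.PhiS j

/-- `j` is a least upper bound of `F` in the weak order at `a`. -/
def IsLUBw {a : G} (F : Set (SHoms G a)) (j : SHoms G a) : Prop :=
  S.IsUB F j ∧ ∀ k : SHoms G a, S.IsUB F k → S.PhiS j ⊆ S.PhiS k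

/-- `S` is complete: the weak order at every object is a complete lattice
(equivalently, every family of morphisms with a common codomain has a join). -/
def Complete : Prop := ∀ (a : G) (F : Set (SHoms G a)), ∃ j : SHoms G a, S.IsLUBw F j

/-- `S` is finite: finitely many objects, morphisms and roots. -/
def FiniteSGS (_S : SGS G R) : Prop :=
  Finite G ∧ (∀ a b : G, Finite (a ⟶ b)) ∧ ∀ a : G, Finite (R a)

/-- A square `(x, w, y, z)`: a commuting square `xw = yz` with `x(Φ_w) = Φ_y`. -/
def Square {a b c d : G} (x : b ⟶ d) (w : a ⟶ b) (y : c ⟶ d) (z : a ⟶ c) : Prop :=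
  w ≫ x = z ≫ y ∧ S.act x '' S.Phi w = S.Phi y

/-- The positive real roots at `a`: the union of all inversion sets at `a`. -/
def posRe (a : G) : Set (R a) := ⋃ g : SHoms G a, S.PhiS g

/-- An atomic morphism: an atom of the weak order at its codomain. -/
def Atomic {a : G} (g : SHoms G a) : Prop :=
  S.PhiS g ≠ ∅ ∧ ∀ h : SHoms G a, S.PhiS h ⊆ S.PhiS g →
    S.PhiS h = ∅ ∨ S.PhiS h = S.PhiS g

/-- A simple morphism: one whose inversion set is a singleton. -/
def Simple {a b : G} (f : b ⟶ a) : Prop := ∃ α : R a, S.Phi f = {α}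

/-- Interval finiteness: every interval `[1ₐ, g]` of a weak order is finite. -/
def IntervalFinite : Prop :=
  ∀ (a : G) (g : SHoms G a), {h : SHoms G a | S.PhiS h ⊆ S.PhiS g}.Finite

/-- Preprincipal: interval finite, and the inversion set of an atomic morphism is
contained in, or disjoint from, any other inversion set at the same object. -/
def Preprincipal : Prop :=
  S.IntervalFinite ∧ ∀ (a : G) (s g : SHoms G a), S.Atomic s →
    S.PhiS s ⊆ S.PhiS g ∨ S.PhiS s ∩ S.PhiS g = ∅

/-- Antipodal: the weak order at each object has a maximum element. -/
def Antipodal : Prop :=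
  ∀ a : G, ∃ ω : SHoms G a, ∀ g : SHoms G a, S.PhiS g ⊆ S.PhiS ω

end SGS

/-- The orthocomplement `g ↦ g^⊥ := g ∘ ω_{dom g}` determined by a choice of maxima
`ω a` of the weak orders. For `g : b ⟶ a`, `g^⊥ = ω_b ≫ g : w_b ⟶ a`. -/
def SGSperp {G : Type u} [Groupoid G] (ω : ∀ a : G, SHoms G a) {a : G}
    (g : SHoms G a) : SHoms G a :=
  ⟨(ω g.1).1, (ω g.1).2 ≫ g.2⟩


namespace SGS

variable {G : Type u} [Groupoid G] {R : G → Type v} (S : SGS G R)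

lemma act_inv_act {a b : G} (f : b ⟶ a) (x : R a) :
    S.act f (S.act (Groupoid.inv f) x) = x := by
  rw [S.act_comp, Groupoid.inv_comp, S.act_id]

lemma act_act_inv {a b : G} (f : b ⟶ a) (x : R b) :
    S.act (Groupoid.inv f) (S.act f x) = x := by
  rw [S.act_comp, Groupoid.comp_inv, S.act_id]

lemma inv_comp'' {a b c : G} (u : c ⟶ b) (v : b ⟶ a) :
    Groupoid.inv (u ≫ v) = Groupoid.inv v ≫ Groupoid.inv u := by
  simp [Groupoid.inv_eq_inv]

lemma act_inv_comp {a b c : G} (u : c ⟶ b) (v : b ⟶ a) (x : R a) :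
    S.act (Groupoid.inv (u ≫ v)) x
      = S.act (Groupoid.inv u) (S.act (Groupoid.inv v) x) := by
  rw [inv_comp'', ← S.act_comp]

lemma inv_inv' {a b : G} (f : b ⟶ a) : Groupoid.inv (Groupoid.inv f) = f := by
  simp [Groupoid.inv_eq_inv]

lemma neg_mem_pos {a : G} {x : R a} (h : x ∉ S.pos a) : S.neg x ∈ S.pos a :=
  (S.pos_iff _).mpr (by rwa [S.neg_neg])

lemma posRe_subset_pos {a : G} : S.posRe a ⊆ S.pos a := by
  rintro α hα
  obtain ⟨g, hg⟩ := Set.mem_iUnion.mp hα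
  exact hg.1

lemma phiS_subset_posRe {a : G} (g : SHoms G a) : S.PhiS g ⊆ S.posRe a :=
  fun α h => Set.mem_iUnion.mpr ⟨g, h⟩

/-- pulling a positive real root back along `f⁻¹` gives a positive real root,
provided it remains positive. -/
lemma posRe_pull {a b : G} (f : b ⟶ a) {α : R a} (hα : α ∈ S.posRe a)
    (hβ : S.act (Groupoid.inv f) α ∈ S.pos b) :
    S.act (Groupoid.inv f) α ∈ S.posRe b := by
  obtain ⟨⟨c, h⟩, hm⟩ := Set.mem_iUnion.mp hα
  refine Set.mem_iUnion.mpr ⟨⟨c, h ≫ Groupoid.inv f⟩, hβ, ?_⟩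
  show S.act (Groupoid.inv (h ≫ Groupoid.inv f)) _ ∉ _
  rw [S.act_inv_comp, inv_inv', S.act_inv_act]
  exact hm.2

lemma posRe_push {a b : G} (f : b ⟶ a) {α : R a} (hα : α ∈ S.pos a)
    (hβ : S.act (Groupoid.inv f) α ∈ S.posRe b) : α ∈ S.posRe a := by
  obtain ⟨⟨c, h⟩, hm⟩ := Set.mem_iUnion.mp hβ
  refine Set.mem_iUnion.mpr ⟨⟨c, h ≫ f⟩, hα, ?_⟩
  show S.act (Groupoid.inv (h ≫ f)) _ ∉ _
  rw [S.act_inv_comp]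
  exact hm.2

lemma neg_act_mem_posRe {a b : G} (f : b ⟶ a) {α : R a} (hα : α ∈ S.Phi f) :
    S.neg (S.act (Groupoid.inv f) α) ∈ S.posRe b := by
  refine Set.mem_iUnion.mpr ⟨⟨a, Groupoid.inv f⟩, S.neg_mem_pos hα.2, ?_⟩
  show S.act (Groupoid.inv (Groupoid.inv f)) _ ∉ _
  rw [inv_inv', S.act_neg, S.act_inv_act]
  exact fun h => ((S.pos_iff α).mp hα.1) h

end SGS

/-- for a faithful antipodal signed groupoid set with maxima `ωₐ`, the map
`g ↦ g^⊥ = g ω_b` is an order-reversing involution of the weak order at `a` with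
`g ∨ g^⊥ = ωₐ`, `g ∧ g^⊥ = 1ₐ`, and `Φ_g ∩ Φ_h = ∅ ↔ g ≤ h^⊥`; consequently, if the
signed groupoid set is complete, each weak order is a complete ortholattice and the
Join Orthogonality Property holds. -/
theorem stmt_13 {G : Type u} [Groupoid G] {R : G → Type v} (S : SGS G R)
    (hfa : S.Faithful) (ω : ∀ a : G, SHoms G a)
    (hmax : ∀ (a : G) (g : SHoms G a), S.PhiS g ⊆ S.PhiS (ω a)) :
    (∀ (a : G) (g h : SHoms G a),
        S.PhiS g ⊆ S.PhiS h → S.PhiS (SGSperp ω h) ⊆ S.PhiS (SGSperp ω g)) ∧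
    (∀ (a : G) (g : SHoms G a), SGSperp ω (SGSperp ω g) = g) ∧
    (∀ (a : G) (g : SHoms G a), S.PhiS g ∪ S.PhiS (SGSperp ω g) = S.PhiS (ω a)) ∧
    (∀ (a : G) (g : SHoms G a), S.PhiS g ∩ S.PhiS (SGSperp ω g) = ∅) ∧
    (∀ (a : G) (g h : SHoms G a),
        S.PhiS g ∩ S.PhiS h = ∅ ↔ S.PhiS g ⊆ S.PhiS (SGSperp ω h)) ∧
    (S.Complete →
      ∀ (a : G) (F : Set (SHoms G a)) (h j : SHoms G a),
        (∀ g ∈ F, S.PhiS g ∩ S.PhiS h = ∅) → S.IsLUBw F j →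
          S.PhiS j ∩ S.PhiS h = ∅) := by
  classical
  -- the maximum's inversion set is the set of all positive real roots
  have hω : ∀ a : G, S.PhiS (ω a) = S.posRe a := fun a =>
    Set.Subset.antisymm (S.phiS_subset_posRe (ω a))
      (Set.iUnion_subset fun g => hmax a g)
  -- key computation: Φ(g^⊥) = posRe \ Φ(g)
  have hperp : ∀ (a : G) (g : SHoms G a),
      S.PhiS (SGSperp ω g) = S.posRe a \ S.PhiS g := by
    intro a g
    ext α
    constructor
    · rintro ⟨hα, hact⟩
      replace hact : S.act (Groupoid.inv (ω g.1).2) (S.act (Groupoid.inv g.2) α)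
          ∉ S.pos (ω g.1).1 := by rw [← S.act_inv_comp]; exact hact
      set β := S.act (Groupoid.inv g.2) α with hβdef
      by_cases hb : β ∈ S.pos g.1
      · have hβre : β ∈ S.posRe g.1 := by
          rw [← hω g.1]; exact ⟨hb, hact⟩
        exact ⟨S.posRe_push g.2 hα hβre, fun hg => hg.2 hb⟩
      · exfalso
        have h1 : α ∈ S.PhiS g := ⟨hα, hb⟩
        have h2 := S.neg_act_mem_posRe g.2 h1
        rw [← hω g.1] at h2
        refine h2.2 ?_
        show S.act (Groupoid.inv (ω g.1).2) (S.neg β) ∈ _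
        rw [S.act_neg]
        exact S.neg_mem_pos hact
    · rintro ⟨hα, hg⟩
      have hαpos : α ∈ S.pos a := S.posRe_subset_pos hα
      have hb : S.act (Groupoid.inv g.2) α ∈ S.pos g.1 := by
        by_contra hb; exact hg ⟨hαpos, hb⟩
      have hβre := S.posRe_pull g.2 hα hb
      rw [← hω g.1] at hβre
      refine ⟨hαpos, ?_⟩
      show S.act (Groupoid.inv ((ω g.1).2 ≫ g.2)) α ∉ _
      rw [S.act_inv_comp]
      exact hβre.2
  -- faithfulness: equal inversion sets force equal morphisms
  have heq : ∀ (a : G) (g h : SHoms G a), S.PhiS g = S.PhiS h → g = h := by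
    rintro a ⟨c, p⟩ ⟨b, q⟩ hΦ
    have hΦ' : S.Phi p = S.Phi q := hΦ
    have hemp : S.Phi (p ≫ Groupoid.inv q) = ∅ := by
      ext γ
      simp only [Set.mem_empty_iff_false, iff_false]
      rintro ⟨hγ, hact⟩
      rw [S.act_inv_comp, SGS.inv_inv'] at hact
      set α := S.act q γ with hαdef
      by_cases hA : α ∈ S.pos a
      · have hq : α ∉ S.Phi q := fun hq => hq.2 (by rw [hαdef, S.act_act_inv]; exact hγ)
        rw [← hΦ'] at hq
        exact hq ⟨hA, hact⟩
      · have hnq : S.neg α ∈ S.Phi q := by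
          refine ⟨S.neg_mem_pos hA, ?_⟩
          rw [S.act_neg, hαdef, S.act_act_inv]
          exact fun h => ((S.pos_iff γ).mp hγ) h
        rw [← hΦ'] at hnq
        have := hnq.2
        rw [S.act_neg] at this
        exact this (S.neg_mem_pos hact)
    obtain ⟨hcb, he⟩ := hfa _ hemp
    subst hcb
    simp only [eqToHom_refl] at he
    have hpq : p = q := by
      rw [← Category.comp_id p, ← Groupoid.inv_comp q, ← Category.assoc, he,
        Category.id_comp]
    rw [hpq]
  have hdisj : ∀ (a : G) (g h : SHoms G a),
      S.PhiS g ∩ S.PhiS h = ∅ ↔ S.PhiS g ⊆ S.PhiS (SGSperp ω h) := by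
    intro a g h
    rw [hperp]
    rw [Set.subset_diff]
    constructor
    · intro hi
      exact ⟨S.phiS_subset_posRe g, Set.disjoint_iff_inter_eq_empty.mpr hi⟩
    · intro hi
      exact Set.disjoint_iff_inter_eq_empty.mp hi.2
  refine ⟨?_, ?_, ?_, ?_, hdisj, ?_⟩
  · intro a g h hgh
    rw [hperp, hperp]
    exact Set.diff_subset_diff_right hgh
  · intro a g
    have : S.PhiS (SGSperp ω (SGSperp ω g)) = S.PhiS g := by
      rw [hperp, hperp, Set.diff_diff_cancel_left (S.phiS_subset_posRe g)]
    exact heq a _ g this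
  · intro a g
    rw [hperp, Set.union_diff_cancel (S.phiS_subset_posRe g), hω]
  · intro a g
    rw [hperp]
    ext α
    simp only [Set.mem_inter_iff, Set.mem_diff, Set.mem_empty_iff_false, iff_false]
    tauto
  · intro _ a F h j hF hj
    rw [hdisj]
    refine hj.2 (SGSperp ω h) ?_
    intro g hg
    exact (hdisj a g h).mp (hF g hg)
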